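/- Let n ≥ 1 be an integer, let 1 < p < ∞, and let p' be the dual exponent defined by 1/p + 1/p' = 1. Let u₀ ∈ L¹(ℝⁿ) and set M = ∫_{ℝⁿ} u₀(x) dx. Then t^{n/(2p')} · ‖u₀ * G_t − M·G_t‖_{L^p(ℝⁿ)} → 0 as t → ∞. -/

import Mathlib

open MeasureTheory Filter Real
open scoped ENNReal Convolution

/-- The Euclidean heat kernel on `ℝⁿ`: `G_t(x) = (4πt)^{-n/2} exp(-‖x‖²/(4t))`. -/
noncomputable def heatKernel (n : ℕ) (t : ℝ) (x : EuclideanSpace ℝ (Fin n)) : ℝ :=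
  (4 * Real.pi * t) ^ (-(n : ℝ) / 2) * Real.exp (-‖x‖ ^ 2 / (4 * t))

section helpers

lemma two_abs_le_exp_sq (x : ℝ) : 2 * |x| ≤ Real.exp (x ^ 2) := by
  have h := Real.add_one_le_exp (x ^ 2)
  nlinarith [sq_abs x, sq_nonneg (|x| - 1)]

lemma abs_exp_neg_sq_sub_le (a b : ℝ) :
    |Real.exp (-a ^ 2) - Real.exp (-b ^ 2)| ≤ |a - b| := by
  have hlip : LipschitzWith 1 (fun s : ℝ => Real.exp (-s ^ 2)) := by
    apply lipschitzWith_of_nnnorm_deriv_le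
    · exact (differentiable_pow 2).neg.exp
    · intro x
      have hd : HasDerivAt (fun s : ℝ => Real.exp (-s ^ 2))
          (Real.exp (-x ^ 2) * (-(2 * x))) x := by
        have h1 : HasDerivAt (fun s : ℝ => -s ^ 2) (-(2 * x)) x := by
          simpa using (hasDerivAt_pow 2 x).fun_neg
        simpa using h1.exp
      rw [hd.deriv]
      have hb : ‖Real.exp (-x ^ 2) * (-(2 * x))‖ ≤ 1 := by
        rw [norm_mul, norm_neg, Real.norm_eq_abs, Real.norm_eq_abs,
          abs_of_pos (Real.exp_pos _), abs_mul, abs_two]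
        have h2 := two_abs_le_exp_sq x
        have h3 : Real.exp (-x ^ 2) * Real.exp (x ^ 2) = 1 := by
          rw [← Real.exp_add]; norm_num
        nlinarith [Real.exp_pos (-x ^ 2), abs_nonneg x]
      exact_mod_cast hb
  have h := hlip.dist_le_mul a b
  simpa [Real.dist_eq] using h

lemma exp_diff_le_min (a b : ℝ) :
    |Real.exp (-a ^ 2) - Real.exp (-b ^ 2)| ≤ min 2 |a - b| := by
  refine le_min ?_ (abs_exp_neg_sq_sub_le a b)
  have h1 : Real.exp (-a ^ 2) ≤ 1 := Real.exp_le_one_iff.mpr (neg_nonpos.mpr (sq_nonneg a))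
  have h2 : Real.exp (-b ^ 2) ≤ 1 := Real.exp_le_one_iff.mpr (neg_nonpos.mpr (sq_nonneg b))
  rw [abs_sub_le_iff]
  constructor <;> nlinarith [Real.exp_pos (-a ^ 2), Real.exp_pos (-b ^ 2)]

variable {n : ℕ} {t : ℝ}

lemma heatKernel_eq (ht : 0 < t) (x : EuclideanSpace ℝ (Fin n)) :
    heatKernel n t x
      = (4 * π * t) ^ (-(n : ℝ) / 2) * Real.exp (-(‖x‖ / (2 * Real.sqrt t)) ^ 2) := by
  unfold heatKernel
  congr 1
  rw [div_pow, mul_pow, Real.sq_sqrt ht.le]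
  ring_nf

lemma heatKernel_nonneg (ht : 0 < t) (x : EuclideanSpace ℝ (Fin n)) :
    0 ≤ heatKernel n t x := by
  unfold heatKernel
  have hπ := Real.pi_pos
  positivity

lemma heatKernel_le (ht : 0 < t) (x : EuclideanSpace ℝ (Fin n)) :
    heatKernel n t x ≤ (4 * π * t) ^ (-(n : ℝ) / 2) := by
  unfold heatKernel
  have hπ := Real.pi_pos
  have h1 : Real.exp (-‖x‖ ^ 2 / (4 * t)) ≤ 1 := by
    apply Real.exp_le_one_iff.mpr
    rw [neg_div]
    exact neg_nonpos.mpr (by positivity)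
  nlinarith [Real.rpow_pos_of_pos (show (0:ℝ) < 4 * π * t by positivity) (-(n : ℝ) / 2),
    Real.exp_pos (-‖x‖ ^ 2 / (4 * t))]

lemma heatKernel_continuous (n : ℕ) (t : ℝ) : Continuous (heatKernel n t) := by
  unfold heatKernel
  fun_prop

lemma heatKernel_integrable (ht : 0 < t) :
    Integrable (heatKernel n t) := by
  have hb : (0 : ℝ) < 1 / (4 * t) := by positivity
  have h0 := (GaussianFourier.integrable_cexp_neg_mul_sq_norm_add
    (V := EuclideanSpace ℝ (Fin n)) (b := ((1 / (4 * t) : ℝ) : ℂ)) (by simpa using hb)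
    0 0).norm
  have h1 : Integrable
      (fun v : EuclideanSpace ℝ (Fin n) => Real.exp (-(1 / (4 * t)) * ‖v‖ ^ 2)) := by
    refine h0.congr (Filter.Eventually.of_forall fun v => ?_)
    simp [Complex.norm_exp, ← Complex.ofReal_pow]
  refine (h1.const_mul ((4 * π * t) ^ (-(n : ℝ) / 2))).congr
    (Filter.Eventually.of_forall fun v => ?_)
  unfold heatKernel
  rw [show -‖v‖ ^ 2 / (4 * t) = -(1 / (4 * t)) * ‖v‖ ^ 2 by ring]

lemma heatKernel_integral (ht : 0 < t) :
    ∫ x : EuclideanSpace ℝ (Fin n), heatKernel n t x = 1 := by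
  have hb : (0 : ℝ) < 1 / (4 * t) := by positivity
  have hπ := Real.pi_pos
  have h4 : (0 : ℝ) < 4 * π * t := by positivity
  have h0 : ∫ x : EuclideanSpace ℝ (Fin n), heatKernel n t x
      = (4 * π * t) ^ (-(n : ℝ) / 2)
        * ∫ x : EuclideanSpace ℝ (Fin n), Real.exp (-(1 / (4 * t)) * ‖x‖ ^ 2) := by
    rw [← integral_const_mul]
    refine integral_congr_ae (Filter.Eventually.of_forall fun x => ?_)
    unfold heatKernel
    rw [show -‖x‖ ^ 2 / (4 * t) = -(1 / (4 * t)) * ‖x‖ ^ 2 by ring]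
  rw [h0, GaussianFourier.integral_rexp_neg_mul_sq_norm hb]
  simp only [finrank_euclideanSpace_fin]
  have hdiv : π / (1 / (4 * t)) = 4 * π * t := by field_simp
  rw [hdiv, ← Real.rpow_add h4, show -(n : ℝ) / 2 + (n : ℝ) / 2 = 0 by ring, Real.rpow_zero]

lemma heatKernel_sub_bound (ht : 0 < t) (x y : EuclideanSpace ℝ (Fin n)) :
    |heatKernel n t (x - y) - heatKernel n t x|
      ≤ (4 * π * t) ^ (-(n : ℝ) / 2) * min 2 (‖y‖ / (2 * Real.sqrt t)) := by
  have hπ := Real.pi_pos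
  have hA : (0 : ℝ) < (4 * π * t) ^ (-(n : ℝ) / 2) :=
    Real.rpow_pos_of_pos (by positivity) _
  rw [heatKernel_eq ht, heatKernel_eq ht, ← mul_sub, abs_mul, abs_of_pos hA]
  refine mul_le_mul_of_nonneg_left ?_ hA.le
  refine (exp_diff_le_min _ _).trans (min_le_min le_rfl ?_)
  have hst : (0 : ℝ) < 2 * Real.sqrt t := by positivity
  have h1 : |‖x - y‖ / (2 * Real.sqrt t) - ‖x‖ / (2 * Real.sqrt t)|
      = |‖x - y‖ - ‖x‖| / (2 * Real.sqrt t) := by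
    rw [← sub_div, abs_div, abs_of_pos hst]
  rw [h1]
  have h2 : |‖x - y‖ - ‖x‖| ≤ ‖y‖ := by
    have := abs_norm_sub_norm_le (x - y) x
    simpa using this
  gcongr

end helpers

/-- For `1 < p < ∞` with dual exponent `p'` and `u₀ ∈ L¹(ℝⁿ)` with mass `M = ∫ u₀`,
one has `t^{n/(2p')} · ‖u₀ * G_t − M · G_t‖_{L^p} → 0` as `t → ∞`. -/
theorem heat_asymptotics_Lp (n : ℕ) (hn : 1 ≤ n)
    (p p' : ℝ) (hp : 1 < p) (hp' : 1 / p + 1 / p' = 1)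
    (u₀ : EuclideanSpace ℝ (Fin n) → ℝ) (hu₀ : Integrable u₀) :
    Tendsto
      (fun t : ℝ =>
        ENNReal.ofReal (t ^ ((n : ℝ) / (2 * p'))) *
          eLpNorm
            (fun x : EuclideanSpace ℝ (Fin n) =>
              (∫ y, u₀ y * heatKernel n t (x - y)) - (∫ x, u₀ x) * heatKernel n t x)
            (ENNReal.ofReal p) volume)
      atTop (nhds 0) := by
  have hπ := Real.pi_pos
  have hp0 : (0:ℝ) < p := lt_trans one_pos hp
  have hpne : p ≠ 0 := ne_of_gt hp0
  have hq1p : 1 / p' = 1 - 1 / p := by linarith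
  have h1p : 0 < 1 / p := by positivity
  have h1p1 : 1 / p < 1 := by rw [div_lt_one hp0]; exact hp
  have hr : 0 < 1 / p' := by rw [hq1p]; linarith
  have hrp : (p - 1) * (1 / p) = 1 / p' := by
    rw [hq1p]; field_simp
  set q : ℝ≥0∞ := ENNReal.ofReal p with hqdef
  have hq0 : q ≠ 0 := by rw [hqdef, Ne, ENNReal.ofReal_eq_zero, not_le]; exact hp0
  have hqt : q ≠ ⊤ := ENNReal.ofReal_ne_top
  have hqr : q.toReal = p := ENNReal.toReal_ofReal hp0.le
  set M : ℝ := ∫ x : EuclideanSpace ℝ (Fin n), u₀ x with hM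
  set I : ℝ := ∫ x : EuclideanSpace ℝ (Fin n), |u₀ x| with hI
  have hI0 : 0 ≤ I := integral_nonneg fun x => abs_nonneg _
  have hMI : |M| ≤ I := by
    simpa [hM, hI, Real.norm_eq_abs] using norm_integral_le_integral_norm (μ := volume) u₀
  set B : ℝ≥0∞ := ENNReal.ofReal (2 * I) with hB
  set D : ℝ → ℝ :=
    fun t => ∫ y : EuclideanSpace ℝ (Fin n), |u₀ y| * min 2 (‖y‖ / (2 * Real.sqrt t)) with hD
  have hφnn : ∀ (t : ℝ) (y : EuclideanSpace ℝ (Fin n)),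
      0 ≤ min 2 (‖y‖ / (2 * Real.sqrt t)) := by
    intro t y
    refine le_min (by norm_num) ?_
    have h1 : 0 ≤ Real.sqrt t := Real.sqrt_nonneg t
    positivity
  have hDnn : ∀ t, 0 ≤ D t := fun t =>
    integral_nonneg fun y => mul_nonneg (abs_nonneg _) (hφnn t y)
  set g : ℝ → ℝ≥0∞ := fun t =>
    ENNReal.ofReal ((4 * π) ^ (-(n : ℝ) / 2) * D t) ^ (1 / p') * B ^ (1 / p) with hg
  -- the key estimate
  have key : ∀ t : ℝ, 1 ≤ t →
      ENNReal.ofReal (t ^ ((n : ℝ) / (2 * p'))) *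
        eLpNorm (fun x : EuclideanSpace ℝ (Fin n) =>
          (∫ y, u₀ y * heatKernel n t (x - y)) - M * heatKernel n t x) q volume ≤ g t := by
    intro t ht1
    have ht : (0:ℝ) < t := lt_of_lt_of_le one_pos ht1
    set K : EuclideanSpace ℝ (Fin n) → ℝ := heatKernel n t with hK
    set A : ℝ := (4 * π * t) ^ (-(n : ℝ) / 2) with hA
    have hApos : 0 < A := Real.rpow_pos_of_pos (by positivity) _
    have hKc : Continuous K := heatKernel_continuous n t
    have hKnn : ∀ x, 0 ≤ K x := heatKernel_nonneg ht
    have hKle : ∀ x, K x ≤ A := heatKernel_le ht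
    have hKint : Integrable K := heatKernel_integrable ht
    have hKI : ∫ x, K x = 1 := heatKernel_integral ht
    have hmul : ∀ x : EuclideanSpace ℝ (Fin n),
        Integrable (fun y => u₀ y * K (x - y)) := by
      intro x
      have hb : Integrable (fun y => K (x - y) * u₀ y) :=
        hu₀.bdd_mul ((hKc.comp (continuous_const.sub continuous_id)).aestronglyMeasurable)
          (c := A) (Filter.Eventually.of_forall fun y => by rw [Real.norm_eq_abs, abs_of_nonneg (hKnn _)]; exact hKle _)
      simpa [mul_comm] using hb
    set φ : EuclideanSpace ℝ (Fin n) → ℝ := fun y => min 2 (‖y‖ / (2 * Real.sqrt t)) with hφ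
    have hφc : Continuous φ := continuous_const.min (continuous_norm.div_const _)
    have hφ2 : ∀ y, φ y ≤ 2 := fun y => min_le_left _ _
    have hDt : D t = ∫ y, |u₀ y| * φ y := rfl
    have hCtnn : 0 ≤ A * D t := mul_nonneg hApos.le (hDnn t)
    -- pointwise bound
    have hpt : ∀ x, |(∫ y, u₀ y * K (x - y)) - M * K x| ≤ A * D t := by
      intro x
      have heq : (∫ y, u₀ y * K (x - y)) - M * K x
          = ∫ y, (u₀ y * K (x - y) - u₀ y * K x) := by
        rw [integral_sub (hmul x) (hu₀.mul_const (K x)), integral_mul_const, hM]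
      rw [heq]
      have hint2 : Integrable (fun y => |u₀ y| * (A * φ y)) := by
        have := hu₀.abs.bdd_mul ((continuous_const.mul hφc).aestronglyMeasurable)
          (f := fun y => A * φ y) (c := A * 2) (Filter.Eventually.of_forall fun y => by
            rw [Real.norm_eq_abs, abs_of_nonneg (mul_nonneg hApos.le (hφnn t y))]
            exact mul_le_mul_of_nonneg_left (hφ2 y) hApos.le)
        simpa [mul_comm] using this
      have h1 : |∫ y, (u₀ y * K (x - y) - u₀ y * K x)| ≤ ∫ y, |u₀ y| * (A * φ y) := by
        rw [← Real.norm_eq_abs]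
        refine (norm_integral_le_integral_norm _).trans ?_
        refine integral_mono ((hmul x).sub (hu₀.mul_const (K x))).norm hint2 fun y => ?_
        rw [Real.norm_eq_abs, ← mul_sub, abs_mul]
        refine mul_le_mul_of_nonneg_left ?_ (abs_nonneg _)
        exact heatKernel_sub_bound ht x y
      refine h1.trans (le_of_eq ?_)
      rw [hDt, ← integral_const_mul]
      exact integral_congr_ae (Filter.Eventually.of_forall fun y => by ring)
    -- L¹ bound
    have hL1 : (∫⁻ x, (‖(∫ y, u₀ y * K (x - y)) - M * K x‖₊ : ℝ≥0∞))
        ≤ ENNReal.ofReal (2 * I) := by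
      set h₁ : EuclideanSpace ℝ (Fin n) → ℝ := fun x => ∫ y, |u₀ y| * K (x - y) with hh₁
      have hconveq : ∀ x, ((fun y => |u₀ y|) ⋆[ContinuousLinearMap.lsmul ℝ ℝ] K) x = h₁ x := by
        intro x
        simp [convolution_def, hh₁, smul_eq_mul]
      have hconv : Integrable h₁ := by
        refine (hu₀.abs.integrable_convolution (ContinuousLinearMap.lsmul ℝ ℝ) hKint).congr
          (Filter.Eventually.of_forall fun x => hconveq x)
      have hconvI : ∫ x, h₁ x = I := by
        have h2 := integral_convolution (ContinuousLinearMap.lsmul ℝ ℝ)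
          (μ := volume) (ν := volume) hu₀.abs hKint
        rw [hKI] at h2
        have h3 : ∫ x, h₁ x = ∫ x, ((fun y => |u₀ y|) ⋆[ContinuousLinearMap.lsmul ℝ ℝ] K) x :=
          integral_congr_ae (Filter.Eventually.of_forall fun x => (hconveq x).symm)
        rw [h3, h2]
        simp [hI, smul_eq_mul]
      have hh₁nn : ∀ x, 0 ≤ h₁ x := fun x =>
        integral_nonneg fun y => mul_nonneg (abs_nonneg _) (hKnn _)
      have hptw : ∀ x, (‖(∫ y, u₀ y * K (x - y)) - M * K x‖₊ : ℝ≥0∞)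
          ≤ ENNReal.ofReal (h₁ x) + ENNReal.ofReal (I * K x) := by
        intro x
        rw [← enorm_eq_nnnorm, Real.enorm_eq_ofReal_abs,
          ← ENNReal.ofReal_add (hh₁nn x) (mul_nonneg hI0 (hKnn x))]
        refine ENNReal.ofReal_le_ofReal ?_
        have e1 : |∫ y, u₀ y * K (x - y)| ≤ h₁ x := by
          rw [← Real.norm_eq_abs]
          refine (norm_integral_le_integral_norm _).trans (le_of_eq ?_)
          refine integral_congr_ae (Filter.Eventually.of_forall fun y => ?_)
          show ‖u₀ y * K (x - y)‖ = |u₀ y| * K (x - y)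
          rw [Real.norm_eq_abs, abs_mul, abs_of_nonneg (hKnn _)]
        have e2 : |M * K x| ≤ I * K x := by
          rw [abs_mul, abs_of_nonneg (hKnn _)]
          exact mul_le_mul_of_nonneg_right hMI (hKnn _)
        calc |(∫ y, u₀ y * K (x - y)) - M * K x|
            ≤ |∫ y, u₀ y * K (x - y)| + |M * K x| := abs_sub _ _
        _ ≤ h₁ x + I * K x := add_le_add e1 e2
      calc (∫⁻ x, (‖(∫ y, u₀ y * K (x - y)) - M * K x‖₊ : ℝ≥0∞))
          ≤ ∫⁻ x, (ENNReal.ofReal (h₁ x) + ENNReal.ofReal (I * K x)) := lintegral_mono hptw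
      _ = (∫⁻ x, ENNReal.ofReal (h₁ x)) + ∫⁻ x, ENNReal.ofReal (I * K x) :=
          lintegral_add_right _ ((ENNReal.measurable_ofReal.comp
            ((continuous_const.mul hKc).measurable)))
      _ = ENNReal.ofReal I + ENNReal.ofReal I := by
          rw [← ofReal_integral_eq_lintegral_ofReal hconv
              (Filter.Eventually.of_forall hh₁nn),
            ← ofReal_integral_eq_lintegral_ofReal (hKint.const_mul I)
              (Filter.Eventually.of_forall fun x => mul_nonneg hI0 (hKnn x)),
            hconvI, integral_const_mul, hKI, mul_one]
      _ = ENNReal.ofReal (2 * I) := by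
          rw [← ENNReal.ofReal_add hI0 hI0]
          ring_nf
    -- Lᵖ bound via interpolation
    set F : EuclideanSpace ℝ (Fin n) → ℝ :=
      fun x => (∫ y, u₀ y * K (x - y)) - M * K x with hF
    have hpow : ∀ x, (‖F x‖₊ : ℝ≥0∞) ^ p
        ≤ ENNReal.ofReal (A * D t) ^ (p - 1) * (‖F x‖₊ : ℝ≥0∞) := by
      intro x
      have hle : (‖F x‖₊ : ℝ≥0∞) ≤ ENNReal.ofReal (A * D t) := by
        rw [← enorm_eq_nnnorm, Real.enorm_eq_ofReal_abs]
        exact ENNReal.ofReal_le_ofReal (hpt x)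
      have hsplit : (‖F x‖₊ : ℝ≥0∞) ^ p = (‖F x‖₊ : ℝ≥0∞) ^ (p - 1) * (‖F x‖₊ : ℝ≥0∞) := by
        rcases eq_or_ne ((‖F x‖₊ : ℝ≥0∞)) 0 with h | h
        · rw [h, ENNReal.zero_rpow_of_pos (by linarith), ENNReal.zero_rpow_of_pos (by linarith),
            mul_zero]
        · calc (‖F x‖₊ : ℝ≥0∞) ^ p = (‖F x‖₊ : ℝ≥0∞) ^ (p - 1 + 1) := by
                rw [sub_add_cancel]
            _ = (‖F x‖₊ : ℝ≥0∞) ^ (p - 1) * (‖F x‖₊ : ℝ≥0∞) := by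
                rw [ENNReal.rpow_add _ _ h ENNReal.coe_ne_top, ENNReal.rpow_one]
      rw [hsplit]
      exact mul_le_mul_left (ENNReal.rpow_le_rpow hle (by linarith)) _
    have hlp : (∫⁻ x, (‖F x‖₊ : ℝ≥0∞) ^ p)
        ≤ ENNReal.ofReal (A * D t) ^ (p - 1) * ENNReal.ofReal (2 * I) := by
      calc (∫⁻ x, (‖F x‖₊ : ℝ≥0∞) ^ p)
          ≤ ∫⁻ x, ENNReal.ofReal (A * D t) ^ (p - 1) * (‖F x‖₊ : ℝ≥0∞) := lintegral_mono hpow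
      _ = ENNReal.ofReal (A * D t) ^ (p - 1) * ∫⁻ x, (‖F x‖₊ : ℝ≥0∞) :=
          lintegral_const_mul' _ _
            (ENNReal.rpow_ne_top_of_nonneg (by linarith) ENNReal.ofReal_ne_top)
      _ ≤ _ := mul_le_mul_right hL1 _
    have hsn2 : eLpNorm F q volume ≤ ENNReal.ofReal (A * D t) ^ (1 / p') * B ^ (1 / p) := by
      rw [eLpNorm_eq_lintegral_rpow_enorm_toReal hq0 hqt, hqr]
      calc (∫⁻ x, (‖F x‖₊ : ℝ≥0∞) ^ p) ^ (1 / p)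
          ≤ (ENNReal.ofReal (A * D t) ^ (p - 1) * B) ^ (1 / p) :=
            ENNReal.rpow_le_rpow hlp (by positivity)
      _ = (ENNReal.ofReal (A * D t) ^ (p - 1)) ^ (1 / p) * B ^ (1 / p) :=
            ENNReal.mul_rpow_of_nonneg _ _ (by positivity)
      _ = ENNReal.ofReal (A * D t) ^ (1 / p') * B ^ (1 / p) := by
            rw [← ENNReal.rpow_mul, hrp]
    -- combine
    have htpow : ENNReal.ofReal (t ^ ((n : ℝ) / (2 * p')))
        = ENNReal.ofReal (t ^ ((n : ℝ) / 2)) ^ (1 / p') := by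
      rw [ENNReal.ofReal_rpow_of_nonneg (Real.rpow_nonneg ht.le _) hr.le,
        ← Real.rpow_mul ht.le, show (n:ℝ)/2 * (1/p') = (n:ℝ)/(2*p') by
          rw [div_mul_div_comm, mul_one]]
    have hsc : t ^ ((n:ℝ)/2) * (A * D t) = (4*π) ^ (-(n : ℝ) / 2) * D t := by
      have h1 : (4*π*t) ^ (-(n:ℝ)/2) = (4*π) ^ (-(n:ℝ)/2) * t ^ (-(n:ℝ)/2) :=
        Real.mul_rpow (by positivity) ht.le
      have h2 : t ^ ((n:ℝ)/2) * t ^ (-(n:ℝ)/2) = 1 := by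
        rw [← Real.rpow_add ht, show (n:ℝ)/2 + -(n:ℝ)/2 = 0 by ring, Real.rpow_zero]
      calc t ^ ((n:ℝ)/2) * (A * D t)
          = t ^ ((n:ℝ)/2) * (((4*π) ^ (-(n:ℝ)/2) * t ^ (-(n:ℝ)/2)) * D t) := by
            rw [hA, h1]
      _ = (t ^ ((n:ℝ)/2) * t ^ (-(n:ℝ)/2)) * ((4*π) ^ (-(n:ℝ)/2) * D t) := by ring
      _ = (4*π) ^ (-(n : ℝ) / 2) * D t := by rw [h2, one_mul]
    calc ENNReal.ofReal (t ^ ((n : ℝ) / (2 * p'))) * eLpNorm F q volume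
        ≤ ENNReal.ofReal (t ^ ((n : ℝ) / (2 * p')))
            * (ENNReal.ofReal (A * D t) ^ (1 / p') * B ^ (1 / p)) :=
          mul_le_mul_right hsn2 _
    _ = (ENNReal.ofReal (t ^ ((n:ℝ)/2)) ^ (1/p') * ENNReal.ofReal (A * D t) ^ (1/p'))
          * B ^ (1/p) := by rw [htpow, mul_assoc]
    _ = (ENNReal.ofReal (t ^ ((n:ℝ)/2) * (A * D t))) ^ (1/p') * B ^ (1/p) := by
          rw [← ENNReal.mul_rpow_of_nonneg _ _ hr.le,
            ← ENNReal.ofReal_mul (Real.rpow_nonneg ht.le _)]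
    _ = g t := by rw [hsc]
  -- limit of D
  have hDto : Tendsto D atTop (nhds 0) := by
    have hsqrt : Tendsto Real.sqrt atTop atTop := by
      refine Filter.Tendsto.congr (fun x => ?_)
        (tendsto_rpow_atTop (by norm_num : (0:ℝ) < 1/2))
      exact (Real.sqrt_eq_rpow x).symm
    have hbd : ∀ (t : ℝ) (y : EuclideanSpace ℝ (Fin n)),
        ‖|u₀ y| * min 2 (‖y‖ / (2 * Real.sqrt t))‖ ≤ |u₀ y| * 2 := by
      intro t y
      rw [Real.norm_eq_abs, abs_mul, abs_abs, abs_of_nonneg (hφnn t y)]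
      exact mul_le_mul_of_nonneg_left (min_le_left _ _) (abs_nonneg _)
    have hlim : ∀ y : EuclideanSpace ℝ (Fin n),
        Tendsto (fun t : ℝ => |u₀ y| * min 2 (‖y‖ / (2 * Real.sqrt t))) atTop
          (nhds (|u₀ y| * 0)) := by
      intro y
      refine Tendsto.const_mul _ ?_
      have h1 : Tendsto (fun t : ℝ => ‖y‖ / (2 * Real.sqrt t)) atTop (nhds 0) :=
        tendsto_const_nhds.div_atTop (hsqrt.const_mul_atTop two_pos)
      have h2 := Filter.Tendsto.min
        (tendsto_const_nhds : Tendsto (fun _ : ℝ => (2:ℝ)) atTop (nhds 2)) h1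
      rwa [min_eq_right (by norm_num : (0:ℝ) ≤ 2)] at h2
    have hmain := tendsto_integral_filter_of_dominated_convergence
      (μ := (volume : Measure (EuclideanSpace ℝ (Fin n)))) (l := atTop)
      (F := fun (t : ℝ) y => |u₀ y| * min 2 (‖y‖ / (2 * Real.sqrt t)))
      (f := fun y => |u₀ y| * 0) (bound := fun y => |u₀ y| * 2)
      (Filter.Eventually.of_forall fun t =>
        hu₀.abs.aestronglyMeasurable.mul
          ((continuous_const.min (continuous_norm.div_const _)).aestronglyMeasurable))
      (Filter.Eventually.of_forall fun t => Filter.Eventually.of_forall fun y => hbd t y)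
      (hu₀.abs.mul_const 2)
      (Filter.Eventually.of_forall hlim)
    simpa [hD] using hmain
  -- limit of the majorant
  have hgto : Tendsto g atTop (nhds 0) := by
    have hc : Tendsto (fun u => (4*π) ^ (-(n:ℝ)/2) * D u) atTop (nhds 0) := by
      simpa using hDto.const_mul ((4*π) ^ (-(n:ℝ)/2))
    have h2 : Tendsto (fun u : ℝ => ((4*π) ^ (-(n:ℝ)/2) * D u) ^ (1/p')) atTop (nhds 0) := by
      have hca : ContinuousAt (fun x : ℝ => x ^ (1/p')) 0 :=
        Real.continuousAt_rpow_const 0 (1/p') (Or.inr hr.le)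
      have h3 := hca.tendsto.comp hc
      rw [show (0:ℝ) ^ (1/p') = 0 from Real.zero_rpow (ne_of_gt hr)] at h3
      simpa [Function.comp_def] using h3
    have h3 : Tendsto (fun u => ENNReal.ofReal (((4*π) ^ (-(n:ℝ)/2) * D u) ^ (1/p')))
        atTop (nhds 0) := by
      have h4 := (ENNReal.continuous_ofReal.tendsto 0).comp h2
      simpa [Function.comp_def] using h4
    have hBne : B ^ (1/p) ≠ ⊤ :=
      ENNReal.rpow_ne_top_of_nonneg h1p.le ENNReal.ofReal_ne_top
    have h4 := ENNReal.Tendsto.mul_const h3 (Or.inr hBne)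
    rw [zero_mul] at h4
    refine h4.congr fun u => ?_
    simp only [hg]
    rw [ENNReal.ofReal_rpow_of_nonneg
      (mul_nonneg (Real.rpow_nonneg (by positivity) _) (hDnn u)) hr.le]
  refine tendsto_of_tendsto_of_tendsto_of_le_of_le' tendsto_const_nhds hgto
    (Filter.Eventually.of_forall fun t => zero_le) ?_
  filter_upwards [eventually_ge_atTop (1:ℝ)] with t ht
  exact key t ht
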